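/- Let H be a 3-graph and let 𝒴 = {𝒴₁, …, 𝒴_m} be a 𝒴-tiling in H of maximum size (i.e., H contains no 𝒴-tiling with more than m copies). Let V' be the union of the vertex sets of 𝒴₁, …, 𝒴_m and U = V(H) \ V'. Then the number of edges of H with exactly one vertex in V' (and two vertices in U) is at most m·C(|U|,2) + 12·m·|U|. -/

import Mathlib

/-- `f` enumerates a `𝒴`-tiling of `H` with `m` members: the `4m` vertices
`f i j` (`i : Fin m`, `j : Fin 4`) are distinct and for each `i` the quadruple
`f i 0, f i 1, f i 2, f i 3` spans a copy of `𝒴` (edges `{f i 0, f i 1, f i 2}` and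
`{f i 1, f i 2, f i 3}`). -/
def IsYTiling {α : Type*} [DecidableEq α] (H : Finset (Finset α)) (m : ℕ)
    (f : Fin m → Fin 4 → α) : Prop :=
  Function.Injective (fun p : Fin m × Fin 4 => f p.1 p.2) ∧
  ∀ i : Fin m, ({f i 0, f i 1, f i 2} : Finset α) ∈ H ∧
    ({f i 1, f i 2, f i 3} : Finset α) ∈ H

/-- The set of vertices covered by the `𝒴`-tiling `f`. -/
def tilingVerts {α : Type*} [Fintype α] [DecidableEq α] (m : ℕ)
    (f : Fin m → Fin 4 → α) : Finset α :=
  Finset.univ.image (fun p : Fin m × Fin 4 => f p.1 p.2)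

section Aux
variable {α : Type*} [DecidableEq α]

/-- `x` has a cherry in `S`: two edges of `H` through `x` whose other vertices lie in `S`
and share exactly one vertex. -/
def HasCherry (H : Finset (Finset α)) (x : α) (S : Finset α) : Prop :=
  ∃ a b c : α, a ∈ S ∧ b ∈ S ∧ c ∈ S ∧ a ≠ b ∧ a ≠ c ∧ b ≠ c ∧
    ({x, a, b} : Finset α) ∈ H ∧ ({x, b, c} : Finset α) ∈ H

lemma pair_decomp {p : Finset α} (hp : p.card = 2) {t : α} (ht : t ∈ p) :
    ∃ y, y ≠ t ∧ p = {t, y} := by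
  obtain ⟨u, v, huv, rfl⟩ := Finset.card_eq_two.1 hp
  rcases Finset.mem_insert.1 ht with h | h
  · exact ⟨v, by simpa [h] using huv.symm, by rw [h]⟩
  · have h' : t = v := by simpa using h
    exact ⟨u, by simpa [h'] using huv, by rw [h', Finset.pair_comm]⟩

lemma matching_bound (H : Finset (Finset α)) (x : α) (S : Finset α)
    (hnc : ¬ HasCherry H x S) :
    ((S.powersetCard 2).filter (fun p => insert x p ∈ H)).card * 2 ≤ S.card := by
  classical
  set P := (S.powersetCard 2).filter (fun p => insert x p ∈ H) with hP
  have hmem : ∀ p ∈ P, p ⊆ S ∧ p.card = 2 ∧ insert x p ∈ H := by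
    intro p hp
    simp only [hP, Finset.mem_filter, Finset.mem_powersetCard] at hp
    exact ⟨hp.1.1, hp.1.2, hp.2⟩
  have hdisj : ∀ p ∈ P, ∀ q ∈ P, p ≠ q → Disjoint (id p) (id q) := by
    intro p hp q hq hpq
    simp only [id]
    rw [Finset.disjoint_left]
    intro t htp htq
    obtain ⟨hpS, hp2, hpH⟩ := hmem p hp
    obtain ⟨hqS, hq2, hqH⟩ := hmem q hq
    obtain ⟨y, hyt, rfl⟩ := pair_decomp hp2 htp
    obtain ⟨z, hzt, rfl⟩ := pair_decomp hq2 htq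
    have hyz : y ≠ z := by rintro rfl; exact hpq rfl
    apply hnc
    refine ⟨y, t, z, hpS (by simp), hpS (by simp), hqS (by simp), hyt, hyz, fun h => hzt h.symm,
      ?_, ?_⟩
    · have : ({x, y, t} : Finset α) = insert x {t, y} := by rw [Finset.pair_comm]
      rw [this]; exact hpH
    · exact hqH
  calc P.card * 2 = ∑ p ∈ P, p.card := by
        rw [Finset.sum_congr rfl (fun p hp => (hmem p hp).2.1), Finset.sum_const, smul_eq_mul,
          Nat.mul_comm]
    _ = (P.biUnion id).card := (Finset.card_biUnion hdisj).symm
    _ ≤ S.card := by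
        apply Finset.card_le_card
        intro y hy
        obtain ⟨p, hp, hyp⟩ := Finset.mem_biUnion.1 hy
        exact (hmem p hp).1 hyp

lemma meets_bound (H : Finset (Finset α)) (x : α) (S T : Finset α) :
    ((S.powersetCard 2).filter (fun p => insert x p ∈ H ∧ ¬ Disjoint p T)).card
      ≤ T.card * S.card := by
  classical
  have hsub : (S.powersetCard 2).filter (fun p => insert x p ∈ H ∧ ¬ Disjoint p T)
      ⊆ T.biUnion (fun t => S.image (fun y => ({t, y} : Finset α))) := by
    intro p hp
    simp only [Finset.mem_filter, Finset.mem_powersetCard] at hp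
    obtain ⟨⟨hpS, hp2⟩, _, hnd⟩ := hp
    obtain ⟨t, htp, htT⟩ := Finset.not_disjoint_iff.1 hnd
    obtain ⟨y, hyt, rfl⟩ := pair_decomp hp2 htp
    exact Finset.mem_biUnion.2 ⟨t, htT, Finset.mem_image.2 ⟨y, hpS (by simp), rfl⟩⟩
  calc ((S.powersetCard 2).filter (fun p => insert x p ∈ H ∧ ¬ Disjoint p T)).card
      ≤ (T.biUnion (fun t => S.image (fun y => ({t, y} : Finset α)))).card :=
        Finset.card_le_card hsub
    _ ≤ ∑ t ∈ T, (S.image (fun y => ({t, y} : Finset α))).card := Finset.card_biUnion_le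
    _ ≤ ∑ _t ∈ T, S.card := Finset.sum_le_sum (fun t _ => Finset.card_image_le)
    _ = T.card * S.card := by rw [Finset.sum_const, smul_eq_mul]

end Aux
section Vec
variable {α : Type*}

lemma vec4_inj_aux {v0 v1 v2 v3 : α} (h01 : v0 ≠ v1) (h02 : v0 ≠ v2) (h03 : v0 ≠ v3)
    (h12 : v1 ≠ v2) (h13 : v1 ≠ v3) (h23 : v2 ≠ v3) {l l' : Fin 4}
    (h : ![v0,v1,v2,v3] l = ![v0,v1,v2,v3] l') : l = l' := by
  fin_cases l <;> fin_cases l' <;> simp_all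

lemma vec4_ne_aux {v0 v1 v2 v3 w0 w1 w2 w3 : α}
    (h00 : v0 ≠ w0) (h01 : v0 ≠ w1) (h02 : v0 ≠ w2) (h03 : v0 ≠ w3)
    (h10 : v1 ≠ w0) (h11 : v1 ≠ w1) (h12 : v1 ≠ w2) (h13 : v1 ≠ w3)
    (h20 : v2 ≠ w0) (h21 : v2 ≠ w1) (h22 : v2 ≠ w2) (h23 : v2 ≠ w3)
    (h30 : v3 ≠ w0) (h31 : v3 ≠ w1) (h32 : v3 ≠ w2) (h33 : v3 ≠ w3)
    (l l' : Fin 4) : ![v0,v1,v2,v3] l ≠ ![w0,w1,w2,w3] l' := by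
  fin_cases l <;> fin_cases l' <;> simp_all

/-- decompose the claim `![v0,v1,v2,v3] l = y` into cases -/
lemma vec4_cases {v0 v1 v2 v3 y : α} {l : Fin 4} (h : ![v0,v1,v2,v3] l = y) :
    v0 = y ∨ v1 = y ∨ v2 = y ∨ v3 = y := by
  fin_cases l <;> simp_all <;> tauto

/-- more precise: tells which index -/
lemma vec4_eq_of {v0 v1 v2 v3 y : α} {l : Fin 4}
    (h0 : v0 ≠ y) (h2 : v2 ≠ y) (h3 : v3 ≠ y)
    (h : ![v0,v1,v2,v3] l = y) : v1 = y := by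
  fin_cases l <;> simp_all

end Vec

section Swap
variable {α : Type*} [Fintype α] [DecidableEq α]

lemma mem_tilingVerts {m : ℕ} {f : Fin m → Fin 4 → α} (i : Fin m) (j : Fin 4) :
    f i j ∈ tilingVerts m f :=
  Finset.mem_image.2 ⟨(i, j), Finset.mem_univ _, rfl⟩

set_option maxHeartbeats 1000000 in
lemma swap_false (H : Finset (Finset α)) (m : ℕ) (f : Fin m → Fin 4 → α)
    (hf : IsYTiling H m f)
    (hmax : ∀ (m' : ℕ) (f' : Fin m' → Fin 4 → α), IsYTiling H m' f' → m' ≤ m)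
    (i : Fin m) (j j' : Fin 4) (hjj : j ≠ j')
    {a b c a' b' c' : α}
    (ha : a ∉ tilingVerts m f) (hb : b ∉ tilingVerts m f) (hc : c ∉ tilingVerts m f)
    (ha' : a' ∉ tilingVerts m f) (hb' : b' ∉ tilingVerts m f) (hc' : c' ∉ tilingVerts m f)
    (hab : a ≠ b) (hac : a ≠ c) (hbc : b ≠ c)
    (hab' : a' ≠ b') (hac' : a' ≠ c') (hbc' : b' ≠ c')
    (haa : a ≠ a') (hab2 : a ≠ b') (hac2 : a ≠ c')
    (hba : b ≠ a') (hbb : b ≠ b') (hbc2 : b ≠ c')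
    (hca : c ≠ a') (hcb : c ≠ b') (hcc : c ≠ c')
    (e1 : ({f i j, a, b} : Finset α) ∈ H) (e2 : ({f i j, b, c} : Finset α) ∈ H)
    (e1' : ({f i j', a', b'} : Finset α) ∈ H) (e2' : ({f i j', b', c'} : Finset α) ∈ H) :
    False := by
  set x := f i j with hx
  set x' := f i j' with hx'
  have hxV : x ∈ tilingVerts m f := mem_tilingVerts i j
  have hx'V : x' ∈ tilingVerts m f := mem_tilingVerts i j'
  have hfinj : ∀ (k : Fin m) (l : Fin 4) (k' : Fin m) (l' : Fin 4),
      f k l = f k' l' → k = k' ∧ l = l' := by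
    intro k l k' l' h
    have := hf.1 (a₁ := (k, l)) (a₂ := (k', l')) h
    exact ⟨congrArg Prod.fst this, congrArg Prod.snd this⟩
  have hxx' : x ≠ x' := fun h => hjj (hfinj i j i j' h).2
  have hax : a ≠ x := fun h => ha (h ▸ hxV)
  have hbx : b ≠ x := fun h => hb (h ▸ hxV)
  have hcx : c ≠ x := fun h => hc (h ▸ hxV)
  have hax' : a ≠ x' := fun h => ha (h ▸ hx'V)
  have hbx' : b ≠ x' := fun h => hb (h ▸ hx'V)
  have hcx' : c ≠ x' := fun h => hc (h ▸ hx'V)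
  have ha'x : a' ≠ x := fun h => ha' (h ▸ hxV)
  have hb'x : b' ≠ x := fun h => hb' (h ▸ hxV)
  have hc'x : c' ≠ x := fun h => hc' (h ▸ hxV)
  have ha'x' : a' ≠ x' := fun h => ha' (h ▸ hx'V)
  have hb'x' : b' ≠ x' := fun h => hb' (h ▸ hx'V)
  have hc'x' : c' ≠ x' := fun h => hc' (h ▸ hx'V)
  have hnotV : ∀ y, y ∉ tilingVerts m f → ∀ (k : Fin m) (l : Fin 4), y ≠ f k l := by
    intro y hy k l h
    exact hy (h ▸ mem_tilingVerts k l)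
  set g : Fin (m+1) → Fin 4 → α := fun k =>
    if hk : (k : ℕ) < m then
      (if (k : ℕ) = (i : ℕ) then ![a, x, b, c] else f ⟨(k : ℕ), hk⟩)
    else ![a', x', b', c'] with hg
  have hginj : Function.Injective (fun p : Fin (m+1) × Fin 4 => g p.1 p.2) := by
    rintro ⟨k, l⟩ ⟨k', l'⟩ h
    simp only [hg] at h
    have hkk : k = k' ∧ l = l' := by
      by_cases hk : (k : ℕ) < m <;> by_cases hk' : (k' : ℕ) < m
      · rw [dif_pos hk, dif_pos hk'] at h
        by_cases hki : (k : ℕ) = (i : ℕ) <;> by_cases hki' : (k' : ℕ) = (i : ℕ)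
        · rw [if_pos hki, if_pos hki'] at h
          exact ⟨Fin.ext (hki.trans hki'.symm),
            vec4_inj_aux hax hab hac hbx.symm hcx.symm hbc h⟩
        · rw [if_pos hki, if_neg hki'] at h
          exfalso
          rcases vec4_cases h with h | h | h | h
          · exact hnotV a ha _ _ h
          · exact hki' (congrArg Fin.val (hfinj i j _ _ h).1).symm
          · exact hnotV b hb _ _ h
          · exact hnotV c hc _ _ h
        · rw [if_neg hki, if_pos hki'] at h
          exfalso
          rcases vec4_cases h.symm with h' | h' | h' | h'
          · exact hnotV a ha _ _ h'
          · exact hki (congrArg Fin.val (hfinj i j _ _ h').1).symm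
          · exact hnotV b hb _ _ h'
          · exact hnotV c hc _ _ h'
        · rw [if_neg hki, if_neg hki'] at h
          obtain ⟨h1, h2⟩ := hfinj _ _ _ _ h
          exact ⟨Fin.ext (by simpa using congrArg Fin.val h1), h2⟩
      · rw [dif_pos hk, dif_neg hk'] at h
        exfalso
        by_cases hki : (k : ℕ) = (i : ℕ)
        · rw [if_pos hki] at h
          exact vec4_ne_aux haa hax' hab2 hac2 ha'x.symm hxx' hb'x.symm hc'x.symm
            hba hbx' hbb hbc2 hca hcx' hcb hcc l l' h
        · rw [if_neg hki] at h
          rcases vec4_cases h.symm with h' | h' | h' | h'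
          · exact hnotV a' ha' _ _ h'
          · exact hki (congrArg Fin.val (hfinj i j' _ _ h').1).symm
          · exact hnotV b' hb' _ _ h'
          · exact hnotV c' hc' _ _ h'
      · rw [dif_neg hk, dif_pos hk'] at h
        exfalso
        by_cases hki' : (k' : ℕ) = (i : ℕ)
        · rw [if_pos hki'] at h
          exact vec4_ne_aux haa hax' hab2 hac2 ha'x.symm hxx' hb'x.symm hc'x.symm
            hba hbx' hbb hbc2 hca hcx' hcb hcc l' l h.symm
        · rw [if_neg hki'] at h
          rcases vec4_cases h with h' | h' | h' | h'
          · exact hnotV a' ha' _ _ h'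
          · exact hki' (congrArg Fin.val (hfinj i j' _ _ h').1).symm
          · exact hnotV b' hb' _ _ h'
          · exact hnotV c' hc' _ _ h'
      · rw [dif_neg hk, dif_neg hk'] at h
        have hklt := k.isLt
        have hklt' := k'.isLt
        refine ⟨Fin.ext (by omega), ?_⟩
        exact vec4_inj_aux ha'x' hab' hac' hb'x'.symm hc'x'.symm hbc' h
    exact Prod.ext hkk.1 hkk.2
  have hgY : IsYTiling H (m + 1) g := by
    refine ⟨hginj, ?_⟩
    intro k
    by_cases hk : (k : ℕ) < m
    · by_cases hki : (k : ℕ) = (i : ℕ)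
      · simp only [hg, dif_pos hk, if_pos hki]
        constructor
        · have heq : ({a, x, b} : Finset α) = {x, a, b} := by
            ext y; simp [or_left_comm]
          show (({![a,x,b,c] 0, ![a,x,b,c] 1, ![a,x,b,c] 2} : Finset α) ∈ H)
          simpa using heq ▸ e1
        · show (({![a,x,b,c] 1, ![a,x,b,c] 2, ![a,x,b,c] 3} : Finset α) ∈ H)
          simpa using e2
      · simp only [hg, dif_pos hk, if_neg hki]
        exact hf.2 _
    · simp only [hg, dif_neg hk]
      constructor
      · have heq : ({a', x', b'} : Finset α) = {x', a', b'} := by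
          ext y; simp [or_left_comm]
        show (({![a',x',b',c'] 0, ![a',x',b',c'] 1, ![a',x',b',c'] 2} : Finset α) ∈ H)
        simpa using heq ▸ e1'
      · show (({![a',x',b',c'] 1, ![a',x',b',c'] 2, ![a',x',b',c'] 3} : Finset α) ∈ H)
        simpa using e2'
  have := hmax (m + 1) g hgY
  omega

end Swap


/-- For a maximum `𝒴`-tiling with `m` members covering `V'`, with `U` the uncovered
vertices, the number of edges with exactly one vertex in `V'` is at most
`m C(|U|,2) + 12 m |U|`. -/
theorem stmt_15 {α : Type*} [Fintype α] [DecidableEq α]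
    (H : Finset (Finset α)) (hH : ∀ e ∈ H, e.card = 3)
    (m : ℕ) (f : Fin m → Fin 4 → α) (hf : IsYTiling H m f)
    (hmax : ∀ (m' : ℕ) (f' : Fin m' → Fin 4 → α), IsYTiling H m' f' → m' ≤ m) :
    (H.filter (fun e => (e ∩ tilingVerts m f).card = 1)).card ≤
      m * ((Finset.univ \ tilingVerts m f).card.choose 2) +
        12 * m * (Finset.univ \ tilingVerts m f).card := by
  classical
  set V' := tilingVerts m f with hV'
  set U := (Finset.univ \ V' : Finset α) with hUdef
  set u := U.card with hu
  set E1 := H.filter (fun e => (e ∩ V').card = 1) with hE1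
  have hfV : ∀ (k : Fin m) (l : Fin 4), f k l ∈ V' := fun k l => mem_tilingVerts k l
  have hUnotV : ∀ y ∈ U, y ∉ V' := by
    intro y hy
    exact (Finset.mem_sdiff.1 hy).2
  -- the unique covered vertex of an edge of E1
  have huniq : ∀ e ∈ E1, ∀ y ∈ e, ∀ z ∈ e, y ∈ V' → z ∈ V' → y = z := by
    intro e he y hy z hz hyV hzV
    have h1 : (e ∩ V').card = 1 := (Finset.mem_filter.1 he).2
    obtain ⟨w, hw⟩ := Finset.card_eq_one.1 h1
    have h2 : y ∈ e ∩ V' := Finset.mem_inter.2 ⟨hy, hyV⟩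
    have h3 : z ∈ e ∩ V' := Finset.mem_inter.2 ⟨hz, hzV⟩
    rw [hw, Finset.mem_singleton] at h2 h3
    exact h2.trans h3.symm
  -- partition of E1 over the pairs (i,j)
  have hcover : E1 = Finset.univ.biUnion
      (fun p : Fin m × Fin 4 => E1.filter (fun e => f p.1 p.2 ∈ e)) := by
    ext e
    simp only [Finset.mem_biUnion, Finset.mem_univ, true_and, Finset.mem_filter]
    constructor
    · intro he
      have h1 : (e ∩ V').card = 1 := (Finset.mem_filter.1 he).2
      obtain ⟨z, hz⟩ := Finset.card_eq_one.1 h1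
      have hzm : z ∈ e ∩ V' := by rw [hz]; exact Finset.mem_singleton_self z
      have hzV : z ∈ V' := (Finset.mem_inter.1 hzm).2
      have hze : z ∈ e := (Finset.mem_inter.1 hzm).1
      rw [hV'] at hzV
      obtain ⟨p, _, hp⟩ := Finset.mem_image.1 hzV
      exact ⟨p, he, by rw [hp]; exact hze⟩
    · rintro ⟨p, he, _⟩
      exact he
  have hdisj : ∀ p ∈ (Finset.univ : Finset (Fin m × Fin 4)),
      ∀ q ∈ (Finset.univ : Finset (Fin m × Fin 4)), p ≠ q →
      Disjoint (E1.filter (fun e => f p.1 p.2 ∈ e)) (E1.filter (fun e => f q.1 q.2 ∈ e)) := by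
    intro p _ q _ hpq
    rw [Finset.disjoint_left]
    intro e hep heq
    obtain ⟨he, hpe⟩ := Finset.mem_filter.1 hep
    obtain ⟨_, hqe⟩ := Finset.mem_filter.1 heq
    have : f p.1 p.2 = f q.1 q.2 :=
      huniq e he _ hpe _ hqe (hfV _ _) (hfV _ _)
    exact hpq (hf.1 this)
  have hEcard : E1.card = ∑ p : Fin m × Fin 4, (E1.filter (fun e => f p.1 p.2 ∈ e)).card := by
    conv_lhs => rw [hcover]
    exact Finset.card_biUnion hdisj
  -- degree vs link
  have hdL : ∀ x ∈ V', (E1.filter (fun e => x ∈ e)).card ≤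
      ((U.powersetCard 2).filter (fun q => insert x q ∈ H)).card := by
    intro x hxV
    apply Finset.card_le_card_of_injOn (fun e => e.erase x)
    · intro e he
      have he' := he
      rw [Finset.mem_coe, Finset.mem_filter] at he'
      obtain ⟨heE, hxe⟩ := he'
      obtain ⟨heH, hcard1⟩ := Finset.mem_filter.1 heE
      have he3 := hH e heH
      have hcard2 : (e.erase x).card = 2 := by
        rw [Finset.card_erase_of_mem hxe, he3]
      have hsub : e.erase x ⊆ U := by
        intro y hy
        obtain ⟨hyx, hye⟩ := Finset.mem_erase.1 hy
        rw [hUdef, Finset.mem_sdiff]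
        refine ⟨Finset.mem_univ _, fun hyV => ?_⟩
        exact hyx (huniq e heE y hye x hxe hyV hxV)
      rw [Finset.mem_coe, Finset.mem_filter, Finset.mem_powersetCard]
      exact ⟨⟨hsub, hcard2⟩, by rw [Finset.insert_erase hxe]; exact heH⟩
    · intro e he e' he' hee
      rw [Finset.mem_coe, Finset.mem_filter] at he he'
      have hee' : e.erase x = e'.erase x := hee
      calc e = insert x (e.erase x) := (Finset.insert_erase he.2).symm
        _ = insert x (e'.erase x) := by rw [hee']
        _ = e' := Finset.insert_erase he'.2
  have hL_le_choose : ∀ x : α,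
      ((U.powersetCard 2).filter (fun q => insert x q ∈ H)).card ≤ u.choose 2 := by
    intro x
    calc ((U.powersetCard 2).filter (fun q => insert x q ∈ H)).card
        ≤ (U.powersetCard 2).card := Finset.card_le_card (Finset.filter_subset _ _)
      _ = u.choose 2 := by rw [Finset.card_powersetCard]
  -- per copy bound
  have hper : ∀ i : Fin m,
      ∑ j : Fin 4, (E1.filter (fun e => f i j ∈ e)).card ≤ u.choose 2 + 12 * u := by
    intro i
    by_cases hch : ∃ j : Fin 4, HasCherry H (f i j) U
    · obtain ⟨j0, a, b, c, haU, hbU, hcU, hab, hac, hbc, he1, he2⟩ := hch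
      set T : Finset α := {a, b, c} with hT
      have hTU : T ⊆ U := by
        intro y hy
        rw [hT] at hy
        rcases Finset.mem_insert.1 hy with h | h
        · exact h ▸ haU
        · rcases Finset.mem_insert.1 h with h' | h'
          · exact h' ▸ hbU
          · exact (Finset.mem_singleton.1 h') ▸ hcU
      have hT3 : T.card = 3 := by
        rw [hT, Finset.card_insert_of_notMem (by simp [hab, hac]),
          Finset.card_insert_of_notMem (by simp [hbc]), Finset.card_singleton]
      have hnc : ∀ j : Fin 4, j ≠ j0 → ¬ HasCherry H (f i j) (U \ T) := by
        intro j hj hcher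
        obtain ⟨a', b', c', ha'U, hb'U, hc'U, hab', hac', hbc', he1', he2'⟩ := hcher
        have hmem : ∀ y ∈ U \ T, y ∉ tilingVerts m f ∧ y ∉ T := by
          intro y hy
          obtain ⟨hyU, hyT⟩ := Finset.mem_sdiff.1 hy
          exact ⟨hUnotV y hyU, hyT⟩
        obtain ⟨ha'V, ha'T⟩ := hmem a' ha'U
        obtain ⟨hb'V, hb'T⟩ := hmem b' hb'U
        obtain ⟨hc'V, hc'T⟩ := hmem c' hc'U
        have haT : a ∈ T := by simp [hT]
        have hbT : b ∈ T := by simp [hT]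
        have hcT : c ∈ T := by simp [hT]
        exact swap_false H m f hf hmax i j0 j (Ne.symm hj)
          (hUnotV a haU) (hUnotV b hbU) (hUnotV c hcU) ha'V hb'V hc'V
          hab hac hbc hab' hac' hbc'
          (fun h => ha'T (h ▸ haT)) (fun h => hb'T (h ▸ haT)) (fun h => hc'T (h ▸ haT))
          (fun h => ha'T (h ▸ hbT)) (fun h => hb'T (h ▸ hbT)) (fun h => hc'T (h ▸ hbT))
          (fun h => ha'T (h ▸ hcT)) (fun h => hb'T (h ▸ hcT)) (fun h => hc'T (h ▸ hcT))
          he1 he2 he1' he2'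
      have hother : ∀ j : Fin 4, j ≠ j0 → (E1.filter (fun e => f i j ∈ e)).card ≤ 4 * u := by
        intro j hj
        set x := f i j with hxd
        set L := (U.powersetCard 2).filter (fun q => insert x q ∈ H) with hL
        have hsplit : (L.filter (fun q => Disjoint q T)).card
            + (L.filter (fun q => ¬ Disjoint q T)).card = L.card :=
          Finset.card_filter_add_card_filter_not (p := fun q => Disjoint q T)
        have h1 : (L.filter (fun q => ¬ Disjoint q T)).card ≤ 3 * u := by
          have heq : L.filter (fun q => ¬ Disjoint q T)
              = (U.powersetCard 2).filter (fun q => insert x q ∈ H ∧ ¬ Disjoint q T) := by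
            rw [hL, Finset.filter_filter]
          rw [heq]
          calc ((U.powersetCard 2).filter (fun q => insert x q ∈ H ∧ ¬ Disjoint q T)).card
              ≤ T.card * U.card := meets_bound H x U T
            _ = 3 * u := by rw [hT3]
        have h2 : (L.filter (fun q => Disjoint q T)).card ≤ u := by
          have hsub2 : L.filter (fun q => Disjoint q T)
              ⊆ ((U \ T).powersetCard 2).filter (fun q => insert x q ∈ H) := by
            intro q hq
            obtain ⟨hqL, hqd⟩ := Finset.mem_filter.1 hq
            obtain ⟨hqP, hqH⟩ := Finset.mem_filter.1 hqL
            obtain ⟨hqU, hq2⟩ := Finset.mem_powersetCard.1 hqP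
            rw [Finset.mem_filter, Finset.mem_powersetCard]
            exact ⟨⟨Finset.subset_sdiff.2 ⟨hqU, hqd⟩, hq2⟩, hqH⟩
          have hmb := matching_bound H x (U \ T) (hnc j hj)
          have hUT : (U \ T).card ≤ u := Finset.card_le_card (Finset.sdiff_subset)
          have := Finset.card_le_card hsub2
          omega
        have hdx := hdL x (hfV i j)
        rw [← hL] at hdx
        omega
      have hj0b : (E1.filter (fun e => f i j0 ∈ e)).card ≤ u.choose 2 :=
        le_trans (hdL _ (hfV i j0)) (hL_le_choose _)
      have hsum : ∑ j : Fin 4, (E1.filter (fun e => f i j ∈ e)).card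
          = (E1.filter (fun e => f i j0 ∈ e)).card
            + ∑ j ∈ Finset.univ.erase j0, (E1.filter (fun e => f i j ∈ e)).card :=
        (Finset.add_sum_erase _ _ (Finset.mem_univ j0)).symm
      have hrest : ∑ j ∈ Finset.univ.erase j0, (E1.filter (fun e => f i j ∈ e)).card
          ≤ 12 * u := by
        have hcarde : (Finset.univ.erase j0 : Finset (Fin 4)).card = 3 := by
          rw [Finset.card_erase_of_mem (Finset.mem_univ _)]
          simp
        calc ∑ j ∈ Finset.univ.erase j0, (E1.filter (fun e => f i j ∈ e)).card
            ≤ (Finset.univ.erase j0).card * (4 * u) := by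
              apply Finset.sum_le_card_nsmul
              intro j hj
              exact hother j (Finset.mem_erase.1 hj).1
          _ = 12 * u := by rw [hcarde]; ring
      omega
    · push_neg at hch
      have hone : ∀ j : Fin 4, (E1.filter (fun e => f i j ∈ e)).card ≤ u := by
        intro j
        have hmb := matching_bound H (f i j) U (hch j)
        have hdx := hdL (f i j) (hfV i j)
        omega
      calc ∑ j : Fin 4, (E1.filter (fun e => f i j ∈ e)).card
          ≤ (Finset.univ : Finset (Fin 4)).card * u :=
            Finset.sum_le_card_nsmul _ _ _ (fun j _ => hone j)
        _ = 4 * u := by simp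
        _ ≤ 12 * u := by omega
        _ ≤ u.choose 2 + 12 * u := Nat.le_add_left _ _
  -- total
  calc E1.card = ∑ p : Fin m × Fin 4, (E1.filter (fun e => f p.1 p.2 ∈ e)).card := hEcard
    _ = ∑ i : Fin m, ∑ j : Fin 4, (E1.filter (fun e => f i j ∈ e)).card := by
        rw [Fintype.sum_prod_type]
    _ ≤ ∑ _i : Fin m, (u.choose 2 + 12 * u) := Finset.sum_le_sum (fun i _ => hper i)
    _ = m * (u.choose 2 + 12 * u) := by
        rw [Finset.sum_const, Finset.card_univ, Fintype.card_fin, smul_eq_mul]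
    _ = m * u.choose 2 + 12 * m * u := by ring
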